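/- arXiv:2410.16793 — 2 statements merged into one kernel-verified Lean document; each statement's English description precedes it below -/
import Mathlib

section
/- For every nonzero d in R^3, det G(d) = 2·(3a/(4|d|))^3, i.e., the determinant of G(d) equals 27a^3/(32|d|^3); in particular G(d) is invertible. -/
noncomputable def Gmat (a : ℝ) (d : EuclideanSpace ℝ (Fin 3)) : Matrix (Fin 3) (Fin 3) ℝ :=
  (3 * a / 4) • (‖d‖⁻¹ • (1 : Matrix (Fin 3) (Fin 3) ℝ)
    + (‖d‖ ^ 3)⁻¹ • Matrix.vecMulVec (fun i => d i) (fun i => d i))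

lemma det_aux (b e x y z : ℝ) :
    Matrix.det !![b + e*(x*x), e*(x*y), e*(x*z);
                  e*(y*x), b + e*(y*y), e*(y*z);
                  e*(z*x), e*(z*y), b + e*(z*z)]
      = b^2 * (b + e*(x^2+y^2+z^2)) := by
  rw [Matrix.det_fin_three]
  simp [Matrix.cons_val_zero, Matrix.cons_val_one]
  ring

theorem stmt_3 (a : ℝ) (ha : 0 < a) (d : EuclideanSpace ℝ (Fin 3)) (hd : d ≠ 0) :
    (Gmat a d).det = 27 * a ^ 3 / (32 * ‖d‖ ^ 3) ∧ IsUnit (Gmat a d) := by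
  have hn : (0:ℝ) < ‖d‖ := norm_pos_iff.mpr hd
  have hsq : ‖d‖ ^ 2 = d 0 ^ 2 + d 1 ^ 2 + d 2 ^ 2 := by
    rw [EuclideanSpace.norm_eq, Real.sq_sqrt (by positivity)]
    simp [Fin.sum_univ_three, sq_abs, pow_two]
  have hM : (‖d‖⁻¹ • (1 : Matrix (Fin 3) (Fin 3) ℝ)
      + (‖d‖ ^ 3)⁻¹ • Matrix.vecMulVec (fun i => d i) (fun i => d i))
      = !![‖d‖⁻¹ + (‖d‖^3)⁻¹*(d 0 * d 0), (‖d‖^3)⁻¹*(d 0 * d 1), (‖d‖^3)⁻¹*(d 0 * d 2);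
           (‖d‖^3)⁻¹*(d 1 * d 0), ‖d‖⁻¹ + (‖d‖^3)⁻¹*(d 1 * d 1), (‖d‖^3)⁻¹*(d 1 * d 2);
           (‖d‖^3)⁻¹*(d 2 * d 0), (‖d‖^3)⁻¹*(d 2 * d 1), ‖d‖⁻¹ + (‖d‖^3)⁻¹*(d 2 * d 2)] := by
    ext i j
    fin_cases i <;> fin_cases j <;>
      simp [Matrix.add_apply, Matrix.smul_apply, Matrix.one_apply, Matrix.vecMulVec_apply]
  have hdet : (Gmat a d).det = 27 * a ^ 3 / (32 * ‖d‖ ^ 3) := by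
    rw [Gmat, Matrix.det_smul, hM, det_aux]
    rw [← hsq]
    have h1 : (‖d‖^3)⁻¹ * ‖d‖^2 = ‖d‖⁻¹ := by
      field_simp
    rw [h1]
    field_simp
    rw [Fintype.card_fin]
    ring
  exact ⟨hdet, by
    rw [Matrix.isUnit_iff_isUnit_det, hdet, isUnit_iff_ne_zero]; positivity⟩
end

section
/- The set S_R^n of well-separated configurations of n points in R^3 is path-connected (hence connected). -/
set_option maxHeartbeats 1000000

private lemma my_lt_norm {R : ℝ} {v : EuclideanSpace ℝ (Fin 3)}
    (h : R ^ 2 < (v 0) ^ 2 + (v 1) ^ 2 + (v 2) ^ 2) : R < ‖v‖ := by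
  rw [EuclideanSpace.norm_eq]
  refine Real.lt_sqrt_of_sq_lt ?_
  simpa [Fin.sum_univ_three, Real.norm_eq_abs, sq_abs] using h

private lemma my_norm_lt {R : ℝ} (hR : 0 ≤ R) {v : EuclideanSpace ℝ (Fin 3)}
    (h : R < ‖v‖) : R ^ 2 < (v 0) ^ 2 + (v 1) ^ 2 + (v 2) ^ 2 := by
  have h2 : R ^ 2 < ‖v‖ ^ 2 := by nlinarith [norm_nonneg v]
  rw [EuclideanSpace.norm_eq, Real.sq_sqrt (by positivity)] at h2
  simpa [Fin.sum_univ_three, Real.norm_eq_abs, sq_abs] using h2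

private lemma my_one_le {m k : ℕ} (h : m ≠ k) : 1 ≤ ((m : ℝ) - (k : ℝ)) ^ 2 := by
  have h' : ((m : ℤ) - (k : ℤ)) ≠ 0 := sub_ne_zero.mpr (by exact_mod_cast h)
  have h1 : (1 : ℤ) ≤ |(m : ℤ) - (k : ℤ)| := Int.one_le_abs h'
  have h2 : (1 : ℝ) ≤ |(m : ℝ) - (k : ℝ)| := by exact_mod_cast h1
  nlinarith [sq_abs ((m : ℝ) - (k : ℝ)), abs_nonneg ((m : ℝ) - (k : ℝ))]

private lemma my_seg {n : ℕ} {S : Set (Fin n → EuclideanSpace ℝ (Fin 3))}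
    {A B : Fin n → EuclideanSpace ℝ (Fin 3)}
    (h : ∀ t : ℝ, 0 ≤ t → t ≤ 1 → (fun α => A α + t • (B α - A α)) ∈ S) :
    JoinedIn S A B := by
  refine ⟨⟨⟨fun t => fun α => A α + (t : ℝ) • (B α - A α), ?_⟩, ?_, ?_⟩,
    fun t => h t t.2.1 t.2.2⟩
  · fun_prop
  · funext α; norm_num
  · funext α; norm_num

private lemma my_join {R : ℝ} (hR : 0 < R) {n : ℕ}
    (z : Fin n → EuclideanSpace ℝ (Fin 3))
    (hz : ∀ α β : Fin n, α ≠ β → ‖z α - z β‖ > R) :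
    JoinedIn {z : Fin n → EuclideanSpace ℝ (Fin 3) | ∀ α β : Fin n, α ≠ β → ‖z α - z β‖ > R}
      z (fun α => EuclideanSpace.single 0 (2 * R * ((α : ℕ) : ℝ))) := by
  classical
  set σ : Equiv.Perm (Fin n) := Tuple.sort (fun α => z α 0) with hσ
  set r : Fin n → ℝ := fun α => ((σ⁻¹ α : Fin n) : ℕ) with hrdef
  have hrinj : ∀ α β : Fin n, α ≠ β → 1 ≤ (r α - r β) ^ 2 := by
    intro α β hab
    refine my_one_le fun h => hab ?_
    have h2 : σ⁻¹ α = σ⁻¹ β := Fin.val_injective h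
    simpa using congrArg σ h2
  have hminj : ∀ α β : Fin n, α ≠ β → 1 ≤ (((α : ℕ) : ℝ) - ((β : ℕ) : ℝ)) ^ 2 :=
    fun α β hab => my_one_le (fun h => hab (Fin.val_injective h))
  have hmono : ∀ α β : Fin n, z α 0 < z β 0 → r α < r β := by
    intro α β h
    by_contra h'
    push_neg at h'
    have hle : σ⁻¹ β ≤ σ⁻¹ α := by
      simp only [hrdef] at h'
      have h2 : ((σ⁻¹ β : Fin n) : ℕ) ≤ ((σ⁻¹ α : Fin n) : ℕ) := by exact_mod_cast h'
      exact h2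
    have h2 := Tuple.monotone_sort (fun α => z α 0) hle
    simp only [Function.comp_apply, ← hσ, Equiv.Perm.inv_def, Equiv.apply_symm_apply] at h2
    exact absurd h2 (not_le.mpr h)
  have hprod : ∀ α β : Fin n, 0 ≤ (z α 0 - z β 0) * (r α - r β) := by
    intro α β
    rcases lt_trichotomy (z α 0) (z β 0) with h | h | h
    · nlinarith [hmono α β h]
    · rw [h, sub_self, zero_mul]
    · nlinarith [hmono β α h]
  have hzz : ∀ α β : Fin n, α ≠ β →
      R ^ 2 < (z α 0 - z β 0) ^ 2 + (z α 1 - z β 1) ^ 2 + (z α 2 - z β 2) ^ 2 := by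
    intro α β hab
    have h2 := my_norm_lt hR.le (hz α β hab)
    simpa [PiLp.sub_apply] using h2
  have f10 : (1 : Fin 3) ≠ 0 := by decide
  have f20 : (2 : Fin 3) ≠ 0 := by decide
  have f01 : (0 : Fin 3) ≠ 1 := by decide
  have f21 : (2 : Fin 3) ≠ 1 := by decide
  set Z : Fin n → EuclideanSpace ℝ (Fin 3) :=
    fun α => z α + EuclideanSpace.single 0 (2 * R * r α) with hZ
  set C : Fin n → EuclideanSpace ℝ (Fin 3) :=
    fun α => EuclideanSpace.single 0 (2 * R * r α) with hC
  set C' : Fin n → EuclideanSpace ℝ (Fin 3) :=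
    fun α => EuclideanSpace.single 0 (2 * R * r α)
      + EuclideanSpace.single 1 (3 * R * (((α : ℕ) : ℝ) + 1)) with hC'
  set D' : Fin n → EuclideanSpace ℝ (Fin 3) :=
    fun α => EuclideanSpace.single 0 (2 * R * ((α : ℕ) : ℝ))
      + EuclideanSpace.single 1 (3 * R * (((α : ℕ) : ℝ) + 1)) with hD'
  have seg1 : JoinedIn {z : Fin n → EuclideanSpace ℝ (Fin 3) |
      ∀ α β : Fin n, α ≠ β → ‖z α - z β‖ > R} z Z := by
    apply my_seg
    intro t ht0 ht1 α β hab
    refine my_lt_norm ?_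
    have h1 := hzz α β hab
    have h2 := hprod α β
    simp only [hZ, PiLp.add_apply, PiLp.sub_apply, PiLp.smul_apply,
      EuclideanSpace.single_apply, smul_eq_mul, if_pos rfl, if_neg f10, if_neg f20,
      if_neg f01, if_neg f21]
    norm_num
    nlinarith [mul_nonneg (mul_nonneg hR.le ht0) h2, sq_nonneg (2 * R * t * (r α - r β))]
  have seg2 : JoinedIn {z : Fin n → EuclideanSpace ℝ (Fin 3) |
      ∀ α β : Fin n, α ≠ β → ‖z α - z β‖ > R} Z C := by
    apply my_seg
    intro t ht0 ht1 α β hab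
    refine my_lt_norm ?_
    have h2 := hprod α β
    have hq : R ^ 2 ≤ R ^ 2 * (r α - r β) ^ 2 := by
      nlinarith [hrinj α β hab, sq_nonneg R]
    have h1t : (0:ℝ) ≤ 1 - t := by linarith
    simp only [hZ, hC, PiLp.add_apply, PiLp.sub_apply, PiLp.smul_apply,
      EuclideanSpace.single_apply, smul_eq_mul, if_pos rfl, if_neg f10, if_neg f20,
      if_neg f01, if_neg f21]
    norm_num
    nlinarith [mul_nonneg (mul_nonneg hR.le h1t) h2, hq, hR,
      sq_nonneg ((1 - t) * (z α 0 - z β 0)), sq_nonneg ((1 - t) * (z α 1 - z β 1)),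
      sq_nonneg ((1 - t) * (z α 2 - z β 2))]
  have seg3 : JoinedIn {z : Fin n → EuclideanSpace ℝ (Fin 3) |
      ∀ α β : Fin n, α ≠ β → ‖z α - z β‖ > R} C C' := by
    apply my_seg
    intro t ht0 ht1 α β hab
    refine my_lt_norm ?_
    have hq : R ^ 2 ≤ R ^ 2 * (r α - r β) ^ 2 := by
      nlinarith [hrinj α β hab, sq_nonneg R]
    simp only [hC, hC', PiLp.add_apply, PiLp.sub_apply, PiLp.smul_apply,
      EuclideanSpace.single_apply, smul_eq_mul, if_pos rfl, if_neg f10, if_neg f20,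
      if_neg f01, if_neg f21]
    norm_num
    nlinarith [hq, hR, sq_nonneg (t * (3 * R * ((α:ℕ) - (β:ℕ))))]
  have seg4 : JoinedIn {z : Fin n → EuclideanSpace ℝ (Fin 3) |
      ∀ α β : Fin n, α ≠ β → ‖z α - z β‖ > R} C' D' := by
    apply my_seg
    intro t ht0 ht1 α β hab
    refine my_lt_norm ?_
    have hqm : R ^ 2 ≤ R ^ 2 * (((α:ℕ):ℝ) - ((β:ℕ):ℝ)) ^ 2 := by
      nlinarith [hminj α β hab, sq_nonneg R]
    simp only [hC', hD', PiLp.add_apply, PiLp.sub_apply, PiLp.smul_apply,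
      EuclideanSpace.single_apply, smul_eq_mul, if_pos rfl, if_neg f10, if_neg f20,
      if_neg f01, if_neg f21]
    norm_num
    nlinarith [hqm, hR, sq_nonneg (2 * R * r α + t * (2 * R * ((α:ℕ):ℝ) - 2 * R * r α)
      - (2 * R * r β + t * (2 * R * ((β:ℕ):ℝ) - 2 * R * r β)))]
  have seg5 : JoinedIn {z : Fin n → EuclideanSpace ℝ (Fin 3) |
      ∀ α β : Fin n, α ≠ β → ‖z α - z β‖ > R} D'
      (fun α => EuclideanSpace.single 0 (2 * R * ((α : ℕ) : ℝ))) := by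
    apply my_seg
    intro t ht0 ht1 α β hab
    refine my_lt_norm ?_
    have hqm : R ^ 2 ≤ R ^ 2 * (((α:ℕ):ℝ) - ((β:ℕ):ℝ)) ^ 2 := by
      nlinarith [hminj α β hab, sq_nonneg R]
    simp only [hD', PiLp.add_apply, PiLp.sub_apply, PiLp.smul_apply,
      EuclideanSpace.single_apply, smul_eq_mul, if_pos rfl, if_neg f10, if_neg f20,
      if_neg f01, if_neg f21]
    norm_num
    nlinarith [hqm, hR, sq_nonneg ((3 * R * (((α:ℕ):ℝ) + 1) - 3 * R * (((β:ℕ):ℝ) + 1))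
      + t * (0 - (3 * R * (((α:ℕ):ℝ) + 1) - 3 * R * (((β:ℕ):ℝ) + 1))))]
  exact seg1.trans (seg2.trans (seg3.trans (seg4.trans seg5)))

theorem stmt_10 (R : ℝ) (hR : 0 < R) (n : ℕ) (hn : 2 ≤ n) :
    IsPathConnected {z : Fin n → EuclideanSpace ℝ (Fin 3) |
      ∀ α β : Fin n, α ≠ β → ‖z α - z β‖ > R} ∧
    IsConnected {z : Fin n → EuclideanSpace ℝ (Fin 3) |
      ∀ α β : Fin n, α ≠ β → ‖z α - z β‖ > R} := by
  have f10 : (1 : Fin 3) ≠ 0 := by decide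
  have f20 : (2 : Fin 3) ≠ 0 := by decide
  have key : IsPathConnected {z : Fin n → EuclideanSpace ℝ (Fin 3) |
      ∀ α β : Fin n, α ≠ β → ‖z α - z β‖ > R} := by
    refine ⟨fun α => EuclideanSpace.single 0 (2 * R * ((α : ℕ) : ℝ)), ?_, ?_⟩
    · intro α β hab
      refine my_lt_norm ?_
      have hm := my_one_le (show (α:ℕ) ≠ (β:ℕ) from fun h => hab (Fin.val_injective h))
      simp only [PiLp.sub_apply, EuclideanSpace.single_apply, if_pos rfl,
        if_neg f10, if_neg f20]
      norm_num
      nlinarith [sq_nonneg R, hR]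
    · intro y hy
      exact (my_join hR y hy).symm
  exact ⟨key, key.isConnected⟩
end
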